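/- In the setting of the distance-decrease lemma, for any x ∈ ℝⁿ, the stochastic subgradients satisfy E_ξ[ Σ_{j=1}^M g_j(k)ᵀ(w̄(k) − x) ] ≥ −2H·||ΔW(k)||_F + E_ξ[ F(w̄(k)) − F(x) ], where g_j(k) is the stochastic subgradient at w_j(k), provided that both the matrix of expected stochastic subgradients at the points w_j(k) and the matrix of expected stochastic subgradients at w̄(k) have Frobenius norm at most H. -/

import Mathlib

open MeasureTheory Matrix Finset

noncomputable section

/-- Squared Frobenius norm of a real matrix. -/
def frobSq {n M : ℕ} (B : Matrix (Fin n) (Fin M) ℝ) : ℝ := ∑ i, ∑ j, B i j ^ 2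

/-- Frobenius norm of a real matrix. -/
def frobNorm {n M : ℕ} (B : Matrix (Fin n) (Fin M) ℝ) : ℝ := Real.sqrt (frobSq B)

/-- Squared Frobenius norm of a complex matrix. -/
def frobSqC {n M : ℕ} (B : Matrix (Fin n) (Fin M) ℂ) : ℝ := ∑ i, ∑ j, ‖B i j‖ ^ 2

/-- The `j`-th column of a matrix, viewed as a vector of `EuclideanSpace ℝ (Fin n)`. -/
def col {n M : ℕ} (B : Matrix (Fin n) (Fin M) ℝ) (j : Fin M) : EuclideanSpace ℝ (Fin n) :=
  WithLp.toLp 2 (fun i => B i j)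

/-- `ΔB := B (I - 𝟙𝟙ᵀ/M)`: subtract from every column the average of all columns. -/
def ctr {n M : ℕ} (B : Matrix (Fin n) (Fin M) ℝ) : Matrix (Fin n) (Fin M) ℝ :=
  Matrix.of fun i j => B i j - (∑ j', B i j') / M

/-- The average of the columns of `B` (the average model `w̄`). -/
def colAvg {n M : ℕ} (B : Matrix (Fin n) (Fin M) ℝ) : EuclideanSpace ℝ (Fin n) :=
  WithLp.toLp 2 (fun i => (∑ j, B i j) / M)

/-- Time average of a sequence of vectors over iterations `0, …, K-1`. -/
def timeAvg {n : ℕ} (K : ℕ) (v : ℕ → EuclideanSpace ℝ (Fin n)) : EuclideanSpace ℝ (Fin n) :=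
  WithLp.toLp 2 (fun i => (∑ k ∈ Finset.range K, v k i) / K)

/-- `g` is a subgradient of `f` at `x`. -/
def IsSubgradAt {n : ℕ} (f : EuclideanSpace ℝ (Fin n) → ℝ)
    (g x : EuclideanSpace ℝ (Fin n)) : Prop :=
  ∀ y, f x + (inner ℝ g (y - x) : ℝ) ≤ f y


lemma frobSq_nonneg' {n M : ℕ} (B : Matrix (Fin n) (Fin M) ℝ) : 0 ≤ frobSq B :=
  Finset.sum_nonneg fun _ _ => Finset.sum_nonneg fun _ _ => sq_nonneg _

lemma abs_dsum_le' {n M : ℕ} (A B : Matrix (Fin n) (Fin M) ℝ) :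
    |∑ j, ∑ i, A i j * B i j| ≤ frobNorm A * frobNorm B := by
  have e1 : (∑ j, ∑ i, A i j * B i j) =
      ∑ p : Fin M × Fin n, A p.2 p.1 * B p.2 p.1 := by
    rw [Fintype.sum_prod_type]
  have e2 : frobSq A = ∑ p : Fin M × Fin n, (A p.2 p.1) ^ 2 := by
    rw [Fintype.sum_prod_type, frobSq, Finset.sum_comm]
  have e3 : frobSq B = ∑ p : Fin M × Fin n, (B p.2 p.1) ^ 2 := by
    rw [Fintype.sum_prod_type, frobSq, Finset.sum_comm]
  have hsq : (∑ j, ∑ i, A i j * B i j) ^ 2 ≤ frobSq A * frobSq B := by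
    rw [e1, e2, e3]
    exact Finset.sum_mul_sq_le_sq_mul_sq Finset.univ _ _
  calc |∑ j, ∑ i, A i j * B i j|
      = Real.sqrt ((∑ j, ∑ i, A i j * B i j) ^ 2) := (Real.sqrt_sq_eq_abs _).symm
    _ ≤ Real.sqrt (frobSq A * frobSq B) := Real.sqrt_le_sqrt hsq
    _ = frobNorm A * frobNorm B := by
        rw [Real.sqrt_mul (frobSq_nonneg' A)]; rfl

/-- **Key inequality in the distance-decrease lemma.** For any `x ∈ ℝⁿ`, the stochastic
subgradients satisfy
`E_ξ[ Σⱼ gⱼ(k)ᵀ (w̄(k) - x) ] ≥ -2H ‖ΔW(k)‖_F + E_ξ[F(w̄(k)) - F(x)]`. -/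
theorem statement12
    (n M : ℕ) (hM : 0 < M)
    -- the local objective functions and the global objective `F`
    (Fj : Fin M → EuclideanSpace ℝ (Fin n) → ℝ)
    (hconv : ∀ j, ConvexOn ℝ Set.univ (Fj j))
    (F : EuclideanSpace ℝ (Fin n) → ℝ) (hFdef : F = fun w => ∑ j, Fj j w)
    -- probability space carrying the minibatch randomness of the current iteration
    {Ω : Type*} [m0 : MeasurableSpace Ω] (μ : Measure Ω) [IsProbabilityMeasure μ]
    -- current estimates `W = W(k)`, the random stochastic subgradient matrix `G = G(k)`,
    -- and a random stochastic subgradient matrix `Gt` taken at the average model `w̄(k)`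
    (W : Matrix (Fin n) (Fin M) ℝ)
    (G Gt : Ω → Matrix (Fin n) (Fin M) ℝ)
    (hGint : ∀ i j, Integrable (fun ω => G ω i j) μ)
    (hGtint : ∀ i j, Integrable (fun ω => Gt ω i j) μ)
    -- the expected stochastic subgradient matrices
    (EG EGt : Matrix (Fin n) (Fin M) ℝ)
    (hEG : ∀ i j, EG i j = ∫ ω, G ω i j ∂μ)
    (hEGt : ∀ i j, EGt i j = ∫ ω, Gt ω i j ∂μ)
    -- unbiasedness: the expected columns are subgradients at `wⱼ(k)` resp. at `w̄(k)`
    (hsub : ∀ j, IsSubgradAt (Fj j) (col EG j) (col W j))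
    (hsubt : ∀ j, IsSubgradAt (Fj j) (col EGt j) (colAvg W))
    -- both expected stochastic subgradient matrices have Frobenius norm at most `H`
    (H : ℝ) (hH : frobNorm EG ≤ H) (hHt : frobNorm EGt ≤ H)
    (x : EuclideanSpace ℝ (Fin n)) :
    -2 * H * frobNorm (ctr W) + (∫ _ω, (F (colAvg W) - F x) ∂μ) ≤
      ∫ ω, ∑ j, ∑ i, G ω i j * (colAvg W i - x i) ∂μ := by
  set wb := colAvg W with hwb
  have hμ : (∫ _ω, (F wb - F x) ∂μ) = F wb - F x := by simp
  have hInt : (∫ ω, ∑ j, ∑ i, G ω i j * (wb i - x i) ∂μ)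
      = ∑ j, ∑ i, EG i j * (wb i - x i) := by
    have h1 : ∀ (j : Fin M) (i : Fin n),
        Integrable (fun ω => G ω i j * (wb i - x i)) μ :=
      fun j i => (hGint i j).mul_const _
    rw [integral_finset_sum _ (fun j _ => integrable_finset_sum _ (fun i _ => h1 j i))]
    refine Finset.sum_congr rfl fun j _ => ?_
    rw [integral_finset_sum _ (fun i _ => h1 j i)]
    refine Finset.sum_congr rfl fun i _ => ?_
    rw [integral_mul_const, ← hEG]
  rw [hμ, hInt]
  have inner_eq : ∀ (u v : EuclideanSpace ℝ (Fin n)),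
      (inner ℝ u v : ℝ) = ∑ i, u i * v i := fun u v => by
    simp [PiLp.inner_apply, RCLike.inner_apply, mul_comm]
  set h := frobNorm (ctr W) with hh
  have hnn : 0 ≤ h := Real.sqrt_nonneg _
  -- subgradient inequality at wⱼ
  have hA : ∀ j, Fj j (col W j) - Fj j x ≤ ∑ i, EG i j * (W i j - x i) := by
    intro j
    have h1 := hsub j x
    rw [inner_eq] at h1
    have e : ∑ i, _root_.col EG j i * (x - _root_.col W j) i = -(∑ i, EG i j * (W i j - x i)) := by
      rw [← Finset.sum_neg_distrib]
      refine Finset.sum_congr rfl fun i _ => ?_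
      show EG i j * (x i - W i j) = -(EG i j * (W i j - x i))
      ring
    rw [e] at h1
    linarith
  -- subgradient inequality at w̄
  have hB : ∀ j, Fj j wb + ∑ i, EGt i j * (W i j - wb i) ≤ Fj j (col W j) := by
    intro j
    have h1 := hsubt j (col W j)
    rw [inner_eq] at h1
    have e : ∑ i, _root_.col EGt j i * (_root_.col W j - wb) i = ∑ i, EGt i j * (W i j - wb i) := by
      refine Finset.sum_congr rfl fun i _ => ?_
      rfl
    rw [e] at h1
    linarith
  -- Cauchy–Schwarz bounds
  have hctr : ∀ i j, ctr W i j = W i j - wb i := fun i j => rfl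
  have cs1 : -(H * h) ≤ ∑ j, ∑ i, EG i j * (wb i - W i j) := by
    have habs := abs_dsum_le' EG (ctr W)
    have e : ∑ j, ∑ i, EG i j * (wb i - W i j)
        = -(∑ j, ∑ i, EG i j * ctr W i j) := by
      rw [← Finset.sum_neg_distrib]
      refine Finset.sum_congr rfl fun j _ => ?_
      rw [← Finset.sum_neg_distrib]
      refine Finset.sum_congr rfl fun i _ => ?_
      rw [hctr]; ring
    have h2 : frobNorm EG * h ≤ H * h := mul_le_mul_of_nonneg_right hH hnn
    have h3 := le_abs_self (∑ j, ∑ i, EG i j * ctr W i j)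
    rw [e]
    rw [← hh] at habs
    linarith
  have cs2 : -(H * h) ≤ ∑ j, ∑ i, EGt i j * (W i j - wb i) := by
    have habs := abs_dsum_le' EGt (ctr W)
    have e : ∑ j, ∑ i, EGt i j * (W i j - wb i)
        = ∑ j, ∑ i, EGt i j * ctr W i j := by
      refine Finset.sum_congr rfl fun j _ => Finset.sum_congr rfl fun i _ => ?_
      rw [hctr]
    have h2 : frobNorm EGt * h ≤ H * h := mul_le_mul_of_nonneg_right hHt hnn
    have h3 := neg_abs_le (∑ j, ∑ i, EGt i j * ctr W i j)
    rw [e]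
    rw [← hh] at habs
    linarith
  -- assemble
  have split : ∑ j, ∑ i, EG i j * (wb i - x i)
      = (∑ j, ∑ i, EG i j * (wb i - W i j)) + ∑ j, ∑ i, EG i j * (W i j - x i) := by
    rw [← Finset.sum_add_distrib]
    refine Finset.sum_congr rfl fun j _ => ?_
    rw [← Finset.sum_add_distrib]
    exact Finset.sum_congr rfl fun i _ => by ring
  have hA' : (∑ j, Fj j (col W j)) - ∑ j, Fj j x
      ≤ ∑ j, ∑ i, EG i j * (W i j - x i) := by
    rw [← Finset.sum_sub_distrib]
    exact Finset.sum_le_sum fun j _ => hA j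
  have hB' : (∑ j, Fj j wb) + ∑ j, ∑ i, EGt i j * (W i j - wb i)
      ≤ ∑ j, Fj j (col W j) := by
    rw [← Finset.sum_add_distrib]
    exact Finset.sum_le_sum fun j _ => hB j
  have hFwb : F wb = ∑ j, Fj j wb := by rw [hFdef]
  have hFx : F x = ∑ j, Fj j x := by rw [hFdef]
  rw [split, hFwb, hFx]
  linarith


end
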